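/- Let f : ℝ^d → ℝ be differentiable and L-gradient Lipschitz with L ≥ 0, let η > 0, r ≥ 0, and N ∈ ℕ. Let x_0, …, x_N ∈ ℝ^d and v_0, …, v_{N−1}, ξ_0, …, ξ_{N−1} ∈ ℝ^d satisfy x_{i+1} = x_i − η(v_i − ξ_i) and ‖ξ_i‖ ≤ r for every 0 ≤ i < N. Then f(x_N) ≤ f(x_0) + η ∑_{i=0}^{N−1} ‖v_i − ∇f(x_i)‖² − (η/2) ∑_{i=0}^{N−1} ‖∇f(x_i)‖² − (1/(2η) − L/2) ∑_{i=0}^{N−1} ‖x_{i+1} − x_i‖² + η N r². -/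

import Mathlib

open scoped RealInnerProductSpace

lemma descent_aux {d : ℕ} (f : EuclideanSpace ℝ (Fin d) → ℝ) (L : ℝ) (hL : 0 ≤ L)
    (hf : Differentiable ℝ f)
    (hlip : ∀ x y : EuclideanSpace ℝ (Fin d),
      ‖gradient f x - gradient f y‖ ≤ L * ‖x - y‖)
    (x y : EuclideanSpace ℝ (Fin d)) :
    f y ≤ f x + ⟪gradient f x, y - x⟫ + L / 2 * ‖y - x‖ ^ 2 := by
  set u := y - x with hu
  have hcont : Continuous (gradient f) := by
    have : LipschitzWith ⟨L, hL⟩ (gradient f) := by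
      apply LipschitzWith.of_dist_le_mul
      intro a b
      rw [dist_eq_norm, dist_eq_norm]; exact hlip a b
    exact this.continuous
  have hγ : ∀ t : ℝ, HasDerivAt (fun t : ℝ => f (x + t • u))
      ⟪gradient f (x + t • u), u⟫ t := by
    intro t
    have h2 : HasDerivAt (fun t : ℝ => x + t • u) u t := by
      simpa using ((hasDerivAt_id t).smul_const u).const_add x
    have h1 := ((hf (x + t • u)).hasFDerivAt).comp_hasDerivAt t h2
    have e : ⟪gradient f (x + t • u), u⟫ = fderiv ℝ f (x + t • u) u :=
      InnerProductSpace.toDual_symm_apply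
    rw [e]; exact h1
  have hcont' : Continuous fun t : ℝ => ⟪gradient f (x + t • u), u⟫ := by
    apply Continuous.inner
    · exact hcont.comp (by continuity)
    · exact continuous_const
  have key : f (x + u) - f x = ∫ t in (0:ℝ)..1, ⟪gradient f (x + t • u), u⟫ := by
    have := intervalIntegral.integral_eq_sub_of_hasDerivAt
      (f := fun t : ℝ => f (x + t • u)) (fun t _ => hγ t)
      (hcont'.intervalIntegrable 0 1)
    simpa only [one_smul, zero_smul, add_zero] using this.symm
  have hbound : (∫ t in (0:ℝ)..1, ⟪gradient f (x + t • u), u⟫)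
      ≤ ∫ t in (0:ℝ)..1, (⟪gradient f x, u⟫ + L * t * ‖u‖ ^ 2) := by
    apply intervalIntegral.integral_mono_on (by norm_num)
      (hcont'.intervalIntegrable 0 1)
      ((by fun_prop : Continuous fun t : ℝ =>
        ⟪gradient f x, u⟫ + L * t * ‖u‖ ^ 2).intervalIntegrable 0 1)
    intro t ht
    have h3 : ⟪gradient f (x + t • u) - gradient f x, u⟫ ≤ L * t * ‖u‖ ^ 2 := by
      calc ⟪gradient f (x + t • u) - gradient f x, u⟫
          ≤ ‖gradient f (x + t • u) - gradient f x‖ * ‖u‖ := real_inner_le_norm _ _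
        _ ≤ (L * ‖(x + t • u) - x‖) * ‖u‖ := by
            gcongr
            exact hlip _ _
        _ = L * (|t| * ‖u‖) * ‖u‖ := by rw [add_sub_cancel_left, norm_smul]; norm_num
        _ = L * t * ‖u‖ ^ 2 := by rw [abs_of_nonneg ht.1]; ring
    have h4 : ⟪gradient f (x + t • u) - gradient f x, u⟫
        = ⟪gradient f (x + t • u), u⟫ - ⟪gradient f x, u⟫ := inner_sub_left _ _ _
    linarith
  have hint : (∫ t in (0:ℝ)..1, (⟪gradient f x, u⟫ + L * t * ‖u‖ ^ 2))
      = ⟪gradient f x, u⟫ + L / 2 * ‖u‖ ^ 2 := by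
    have heq : (fun t : ℝ => ⟪gradient f x, u⟫ + L * t * ‖u‖ ^ 2)
        = fun t : ℝ => ⟪gradient f x, u⟫ + (L * ‖u‖ ^ 2) * t := by funext t; ring
    rw [heq, intervalIntegral.integral_add (intervalIntegrable_const)
      ((by fun_prop : Continuous fun t : ℝ => L * ‖u‖ ^ 2 * t).intervalIntegrable 0 1),
      intervalIntegral.integral_const_mul, integral_id, intervalIntegral.integral_const]
    simp
    ring
  have hy : y = x + u := by rw [hu]; abel
  rw [hy]
  linarith [key, hbound, hint]

lemma step_aux {d : ℕ} (f : EuclideanSpace ℝ (Fin d) → ℝ) (L : ℝ) (hL : 0 ≤ L)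
    (hf : Differentiable ℝ f)
    (hlip : ∀ x y : EuclideanSpace ℝ (Fin d),
      ‖gradient f x - gradient f y‖ ≤ L * ‖x - y‖)
    (η r : ℝ) (hη : 0 < η) (hr : 0 ≤ r)
    (x v ξ : EuclideanSpace ℝ (Fin d)) (x' : EuclideanSpace ℝ (Fin d))
    (hupd : x' = x - η • (v - ξ)) (hξ : ‖ξ‖ ≤ r) :
    f x' ≤ f x + η * ‖v - gradient f x‖ ^ 2 - η / 2 * ‖gradient f x‖ ^ 2
      - (1 / (2 * η) - L / 2) * ‖x' - x‖ ^ 2 + η * r ^ 2 := by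
  set g := gradient f x with hg
  set w := v - ξ with hw
  have hΔ : x' - x = (-η) • w := by rw [hupd]; module
  have hd := descent_aux f L hL hf hlip x x'
  rw [hΔ] at hd ⊢
  have hnorm : ‖(-η) • w‖ ^ 2 = η ^ 2 * ‖w‖ ^ 2 := by
    rw [norm_smul]; simp [abs_of_pos hη]; ring
  have hinner : ⟪g, (-η) • w⟫ = -η * ⟪g, w⟫ := real_inner_smul_right _ _ _
  rw [hinner, hnorm] at hd
  rw [hnorm]
  -- key algebraic inequality
  have h1 : ‖g - w‖ ^ 2 = ‖g‖ ^ 2 - 2 * ⟪g, w⟫ + ‖w‖ ^ 2 := by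
    rw [@norm_sub_sq_real]
  have h2 : ‖g - w‖ ≤ ‖v - g‖ + r := by
    have : g - w = -((v - g) - ξ) := by rw [hw]; module
    rw [this, norm_neg]
    calc ‖(v - g) - ξ‖ ≤ ‖v - g‖ + ‖ξ‖ := norm_sub_le _ _
      _ ≤ ‖v - g‖ + r := by linarith
  have h3 : ‖g - w‖ ^ 2 ≤ 2 * ‖v - g‖ ^ 2 + 2 * r ^ 2 := by
    nlinarith [mul_self_le_mul_self (norm_nonneg (g - w)) h2, sq_nonneg (‖v - g‖ - r)]
  have h4 : (1 / (2 * η)) * (η ^ 2 * ‖w‖ ^ 2) = η / 2 * ‖w‖ ^ 2 := by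
    field_simp
  nlinarith [hd, h1, h3, h4]



/-- Multi-step descent inequality along the perturbed update
`x_{i+1} = x_i - η (v_i - ξ_i)` with `‖ξ_i‖ ≤ r`. -/
theorem stmt_2 {d : ℕ} (f : EuclideanSpace ℝ (Fin d) → ℝ) (L : ℝ) (hL : 0 ≤ L)
    (hf : Differentiable ℝ f)
    (hlip : ∀ x y : EuclideanSpace ℝ (Fin d),
      ‖gradient f x - gradient f y‖ ≤ L * ‖x - y‖)
    (η r : ℝ) (hη : 0 < η) (hr : 0 ≤ r) (N : ℕ)
    (x v ξ : ℕ → EuclideanSpace ℝ (Fin d))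
    (hupd : ∀ i < N, x (i + 1) = x i - η • (v i - ξ i))
    (hξ : ∀ i < N, ‖ξ i‖ ≤ r) :
    f (x N) ≤ f (x 0)
      + η * ∑ i ∈ Finset.range N, ‖v i - gradient f (x i)‖ ^ 2
      - (η / 2) * ∑ i ∈ Finset.range N, ‖gradient f (x i)‖ ^ 2
      - (1 / (2 * η) - L / 2) * ∑ i ∈ Finset.range N, ‖x (i + 1) - x i‖ ^ 2
      + η * N * r ^ 2 := by
  induction N with
  | zero => simp
  | succ n ih =>
    have IH := ih (fun i hi => hupd i (Nat.lt_succ_of_lt hi))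
      (fun i hi => hξ i (Nat.lt_succ_of_lt hi))
    have hstep := step_aux f L hL hf hlip η r hη hr (x n) (v n) (ξ n) (x (n + 1))
      (hupd n (Nat.lt_succ_self n)) (hξ n (Nat.lt_succ_self n))
    rw [Finset.sum_range_succ, Finset.sum_range_succ, Finset.sum_range_succ]
    push_cast
    linarith
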